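/- arXiv:1602.03448 — 2 statements merged into one kernel-verified Lean document; each statement's English description precedes it below -/
import Mathlib

section
/- The set H of elements of G that are translations equals {x ↦ x + 2q : q ∈ ℤ²}, and H is a normal subgroup of G of index 2. -/
/-- The point reflection `x ↦ 2p - x` of the plane `ℝ²` about an integer point `p`. -/
noncomputable def ptRefl (p : ℤ × ℤ) : Equiv.Perm (ℝ × ℝ) :=
  Equiv.pointReflection ((p.1 : ℝ), (p.2 : ℝ))

/-- The translation `x ↦ x + 2q` of the plane `ℝ²` by an even integer vector `2q`. -/
noncomputable def evenTransl (q : ℤ × ℤ) : Equiv.Perm (ℝ × ℝ) :=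
  Equiv.addRight ((2 * q.1 : ℤ), (2 * q.2 : ℤ))

/-- The subgroup `G` of the group of bijections of `ℝ²` generated by the point
reflections about integer points. -/
noncomputable def Ggrp : Subgroup (Equiv.Perm (ℝ × ℝ)) :=
  Subgroup.closure (Set.range ptRefl)

lemma ptRefl_apply (p : ℤ × ℤ) (x : ℝ × ℝ) :
    ptRefl p x = (2 * p.1 - x.1, 2 * p.2 - x.2) := by
  simp only [ptRefl, Equiv.pointReflection_apply, Prod.ext_iff, Prod.fst_vadd, Prod.snd_vadd,
    Prod.fst_vsub, Prod.snd_vsub]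
  constructor <;> simp [vsub_eq_sub, vadd_eq_add] <;> ring

lemma evenTransl_apply (q : ℤ × ℤ) (x : ℝ × ℝ) :
    evenTransl q x = (x.1 + 2 * q.1, x.2 + 2 * q.2) := by
  simp only [evenTransl, Equiv.coe_addRight, Prod.ext_iff]
  push_cast
  constructor <;> rfl

lemma mulTT (q q' : ℤ × ℤ) : evenTransl q * evenTransl q' = evenTransl (q + q') := by
  ext x <;> simp [Equiv.Perm.mul_apply, evenTransl_apply] <;> ring

lemma mulRT (p q : ℤ × ℤ) : ptRefl p * evenTransl q = ptRefl (p - q) := by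
  ext x <;> simp [Equiv.Perm.mul_apply, evenTransl_apply, ptRefl_apply] <;> ring

lemma mulTR (p q : ℤ × ℤ) : evenTransl q * ptRefl p = ptRefl (p + q) := by
  ext x <;> simp [Equiv.Perm.mul_apply, evenTransl_apply, ptRefl_apply] <;> ring

lemma mulRR (p q : ℤ × ℤ) : ptRefl p * ptRefl q = evenTransl (p - q) := by
  ext x <;> simp [Equiv.Perm.mul_apply, evenTransl_apply, ptRefl_apply] <;> ring

lemma invR (p : ℤ × ℤ) : (ptRefl p)⁻¹ = ptRefl p := by
  rw [eq_comm, eq_inv_iff_mul_eq_one, mulRR]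
  ext x <;> simp [evenTransl_apply]

lemma invT (q : ℤ × ℤ) : (evenTransl q)⁻¹ = evenTransl (-q) := by
  rw [eq_comm, eq_inv_iff_mul_eq_one, mulTT]
  ext x <;> simp [evenTransl_apply]

lemma ptRefl_not_transl (p : ℤ × ℤ) : ptRefl p ∉ Set.range evenTransl := by
  rintro ⟨q, hq⟩
  have h0 := congrArg (fun f : Equiv.Perm (ℝ × ℝ) => (f (0, 0)).1) hq
  have h1 := congrArg (fun f : Equiv.Perm (ℝ × ℝ) => (f (1, 0)).1) hq
  simp [ptRefl_apply, evenTransl_apply] at h0 h1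
  have h0' : (q.1 : ℝ) = (p.1 : ℝ) := by exact_mod_cast h0
  linarith

lemma mem_Ggrp_iff (g : Equiv.Perm (ℝ × ℝ)) :
    g ∈ Ggrp ↔ g ∈ Set.range evenTransl ∪ Set.range ptRefl := by
  constructor
  · intro hg
    induction hg using Subgroup.closure_induction with
    | mem x hx => exact Or.inr hx
    | one => exact Or.inl ⟨0, by ext x <;> simp [evenTransl_apply]⟩
    | mul a b ha hb iha ihb =>
      rcases iha with ⟨q, rfl⟩ | ⟨p, rfl⟩ <;> rcases ihb with ⟨q', rfl⟩ | ⟨p', rfl⟩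
      · exact Or.inl ⟨q + q', (mulTT q q').symm⟩
      · exact Or.inr ⟨p' + q, (mulTR p' q).symm⟩
      · exact Or.inr ⟨p - q', (mulRT p q').symm⟩
      · exact Or.inl ⟨p - p', (mulRR p p').symm⟩
    | inv a ha iha =>
      rcases iha with ⟨q, rfl⟩ | ⟨p, rfl⟩
      · exact Or.inl ⟨-q, (invT q).symm⟩
      · exact Or.inr ⟨p, (invR p).symm⟩
  · rintro (⟨q, rfl⟩ | ⟨p, rfl⟩)
    · have : evenTransl q = ptRefl q * ptRefl 0 := by rw [mulRR, sub_zero]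
      rw [this]
      exact mul_mem (Subgroup.subset_closure ⟨q, rfl⟩) (Subgroup.subset_closure ⟨0, rfl⟩)
    · exact Subgroup.subset_closure ⟨p, rfl⟩

lemma transl_set_eq :
    {g : Equiv.Perm (ℝ × ℝ) | g ∈ Ggrp ∧ ∃ v : ℝ × ℝ, ∀ x, g x = x + v} =
      Set.range evenTransl := by
  ext g
  constructor
  · rintro ⟨hg, v, hv⟩
    rcases (mem_Ggrp_iff g).1 hg with h | ⟨p, rfl⟩
    · exact h
    · exfalso
      have h0 := hv (0, 0)
      have h1 := hv (1, 0)
      rw [ptRefl_apply] at h0 h1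
      have e0 : (2 * (p.1 : ℝ) - 0) = 0 + v.1 := congrArg Prod.fst h0
      have e1 : (2 * (p.1 : ℝ) - 1) = 1 + v.1 := congrArg Prod.fst h1
      linarith
  · rintro ⟨q, rfl⟩
    refine ⟨(mem_Ggrp_iff _).2 (Or.inl ⟨q, rfl⟩), ((2 * q.1 : ℤ), (2 * q.2 : ℤ)), fun x => ?_⟩
    rw [evenTransl_apply]
    push_cast
    rfl

noncomputable def Hgrp : Subgroup (Equiv.Perm (ℝ × ℝ)) where
  carrier := Set.range evenTransl
  one_mem' := ⟨0, by ext x <;> simp [evenTransl_apply]⟩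
  mul_mem' := by rintro a b ⟨q, rfl⟩ ⟨q', rfl⟩; exact ⟨q + q', (mulTT q q').symm⟩
  inv_mem' := by rintro a ⟨q, rfl⟩; exact ⟨-q, (invT q).symm⟩

/-- The set `H` of elements of `G` that are translations equals the set of
translations by even integer vectors, and `H` is a normal subgroup of `G` of index 2. -/
theorem stmt_8 :
    ({g : Equiv.Perm (ℝ × ℝ) | g ∈ Ggrp ∧ ∃ v : ℝ × ℝ, ∀ x, g x = x + v} =
      Set.range evenTransl) ∧
    ∃ H : Subgroup (Equiv.Perm (ℝ × ℝ)),
      (H : Set (Equiv.Perm (ℝ × ℝ))) =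
          {g : Equiv.Perm (ℝ × ℝ) | g ∈ Ggrp ∧ ∃ v : ℝ × ℝ, ∀ x, g x = x + v} ∧
      (H.subgroupOf Ggrp).Normal ∧ (H.subgroupOf Ggrp).index = 2 := by
  refine ⟨transl_set_eq, Hgrp, by rw [transl_set_eq]; rfl, ⟨?_⟩, ?_⟩
  · rintro ⟨n, hn⟩ hmem ⟨g, hg⟩
    rw [Subgroup.mem_subgroupOf] at hmem ⊢
    obtain ⟨q, rfl⟩ : n ∈ Set.range evenTransl := hmem
    rcases (mem_Ggrp_iff g).1 hg with ⟨q', rfl⟩ | ⟨p, rfl⟩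
    · show evenTransl q' * evenTransl q * (evenTransl q')⁻¹ ∈ Hgrp
      rw [invT, mulTT, mulTT]
      exact ⟨_, rfl⟩
    · show ptRefl p * evenTransl q * (ptRefl p)⁻¹ ∈ Hgrp
      rw [invR, mulRT, mulRR]
      exact ⟨_, rfl⟩
  · rw [Subgroup.index_eq_two_iff]
    have ha0 : ptRefl 0 ∈ Ggrp := Subgroup.subset_closure ⟨0, rfl⟩
    refine ⟨⟨ptRefl 0, ha0⟩, ?_⟩
    rintro ⟨b, hb⟩
    have hcoe : ((⟨b, hb⟩ * ⟨ptRefl 0, ha0⟩ : Ggrp) : Equiv.Perm (ℝ × ℝ)) = b * ptRefl 0 := rfl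
    rcases (mem_Ggrp_iff b).1 hb with ⟨q, rfl⟩ | ⟨p, rfl⟩
    · refine Or.inr ⟨?_, fun h => ?_⟩
      · rw [Subgroup.mem_subgroupOf]; exact ⟨q, rfl⟩
      · rw [Subgroup.mem_subgroupOf, hcoe, mulTR] at h
        exact ptRefl_not_transl _ h
    · refine Or.inl ⟨?_, fun h => ?_⟩
      · rw [Subgroup.mem_subgroupOf, hcoe, mulRR]
        exact ⟨_, rfl⟩
      · rw [Subgroup.mem_subgroupOf] at h
        exact ptRefl_not_transl p h
end

section
/- The map (a, b, σ) ↦ σ·v4(a,b), defined for σ ∈ Z and integers a, b with a ≥ 0, b ≥ 1 and gcd(a,b) = 1, is injective: if σ·v4(a,b) = σ'·v4(a',b') for two such triples, then σ = σ', a = a' and b = b'. -/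
/-- The vector `v4(a,b) = (−b, a, b−a, −b, a, b−a) ∈ ℤ^6`. -/
def v4 (a b : ℤ) : Fin 6 → ℤ := ![-b, a, b - a, -b, a, b - a]

/-- The permutation `(123)(456)` of `{1,…,6}`, on 0-indexed `Fin 6`:
`0 ↦ 1 ↦ 2 ↦ 0` and `3 ↦ 4 ↦ 5 ↦ 3`. -/
def zgen : Equiv.Perm (Fin 6) :=
  Equiv.swap 0 1 * Equiv.swap 1 2 * (Equiv.swap 3 4 * Equiv.swap 4 5)

/-- The cyclic group `Z = ⟨(123)(456)⟩`. -/
def Zgrp : Subgroup (Equiv.Perm (Fin 6)) := Subgroup.closure {zgen}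

/-- A permutation `σ` acts on `ℤ^6` by permuting coordinates: the `σ(i)`-th entry of
`σ·x` is the `i`-th entry of `x`; equivalently `(σ·x) j = x (σ⁻¹ j)`. -/
def permAct (σ : Equiv.Perm (Fin 6)) (x : Fin 6 → ℤ) : Fin 6 → ℤ :=
  fun j => x (σ⁻¹ j)

lemma zgen_pow3 : zgen ^ (3:ℤ) = 1 := by decide

lemma mem_Z_cases (σ : Equiv.Perm (Fin 6)) (h : σ ∈ Zgrp) :
    σ = 1 ∨ σ = zgen ∨ σ = zgen * zgen := by
  obtain ⟨n, rfl⟩ := Subgroup.mem_closure_singleton.mp h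
  have key : zgen ^ n = zgen ^ (n % 3) := by
    conv_lhs => rw [show n = 3 * (n / 3) + n % 3 by omega]
    rw [zpow_add, zpow_mul, zgen_pow3, one_zpow, one_mul]
  have h0 : (0:ℤ) ≤ n % 3 := Int.emod_nonneg n (by norm_num)
  have h3 : n % 3 < 3 := Int.emod_lt_of_pos n (by norm_num)
  interval_cases h : n % 3 <;> rw [key]
  · left; exact zpow_zero zgen
  · right; left; exact zpow_one zgen
  · right; right; exact zpow_two zgen

lemma pa_one (a b : ℤ) : permAct 1 (v4 a b) = ![-b, a, b - a, -b, a, b - a] := by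
  funext j; fin_cases j <;> rfl

lemma pa_z (a b : ℤ) : permAct zgen (v4 a b) = ![b - a, -b, a, b - a, -b, a] := by
  funext j; fin_cases j <;> rfl

lemma pa_zz (a b : ℤ) : permAct (zgen * zgen) (v4 a b) = ![a, b - a, -b, a, b - a, -b] := by
  funext j; fin_cases j <;> rfl

/-- the map `(a, b, σ) ↦ σ·v4(a,b)` on triples with `σ ∈ Z`, `a ≥ 0`,
`b ≥ 1`, `gcd(a,b) = 1` is injective. -/
theorem stmt_14 (σ σ' : Equiv.Perm (Fin 6)) (hσ : σ ∈ Zgrp) (hσ' : σ' ∈ Zgrp)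
    (a b a' b' : ℤ) (ha : 0 ≤ a) (hb : 1 ≤ b) (hab : Int.gcd a b = 1)
    (ha' : 0 ≤ a') (hb' : 1 ≤ b') (hab' : Int.gcd a' b' = 1)
    (heq : permAct σ (v4 a b) = permAct σ' (v4 a' b')) :
    σ = σ' ∧ a = a' ∧ b = b' := by
  rcases mem_Z_cases σ hσ with rfl | rfl | rfl <;>
    rcases mem_Z_cases σ' hσ' with rfl | rfl | rfl <;>
    simp only [pa_one, pa_z, pa_zz] at heq <;>
    (have h0 := congrFun heq 0
     have h1 := congrFun heq 1
     have h2 := congrFun heq 2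
     simp only [Matrix.cons_val_zero, Matrix.cons_val_one, Matrix.head_cons,
       Matrix.cons_val_two, Matrix.tail_cons] at h0 h1 h2
     first
       | (exfalso; omega)
       | exact ⟨rfl, by omega, by omega⟩)
end
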